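/- Let f be a model satisfying Invariant Aggregation and C(x) = F_{f(b_x)}(1,...,1) as above. Then C is coordinatewise nondecreasing on [0,1]ⁿ: if x ≤ y componentwise, then C(x) ≤ C(y). -/

import Mathlib

open MeasureTheory Finset Function

noncomputable section

/-- The uniform probability measure on `[0,1] ⊆ ℝ`. -/
def unif01 : Measure ℝ := volume.restrict (Set.Icc 0 1)

/-- `q` is a probability mass function on `[w] = {1,…,w}`. -/
def IsPMF (w : ℕ) (q : ℕ → ℝ) : Prop :=
  (∀ t, 0 ≤ q t) ∧ (∀ t, t ∉ Finset.Icc 1 w → q t = 0) ∧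
    ∑ t ∈ Finset.Icc 1 w, q t = 1

/-- Collapse of adjacent bins `j` and `j+1`: `q^j(t) = q(t)·1{t ≤ j} + q(t+1)·1{t ≥ j}`. -/
def collapsePM (j : ℕ) (q : ℕ → ℝ) : ℕ → ℝ :=
  fun t => (if t ≤ j then q t else 0) + (if j ≤ t then q (t + 1) else 0)

/-- CDF of a pmf on `{1,…,w}`. -/
def pmfCDF (q : ℕ → ℝ) (t : ℕ) : ℝ := ∑ s ∈ Finset.Icc 1 t, q s

/-- The product box `∏ᵢ {1,…,zᵢ}`. -/
def prodBox {n : ℕ} (z : Fin n → ℕ) : Finset (Fin n → ℕ) :=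
  Fintype.piFinset fun i => Finset.Icc 1 (z i)

/-- `μ` is a joint pmf on `∏ᵢ {1,…,zᵢ}`. -/
def IsJointPMF {n : ℕ} (z : Fin n → ℕ) (μ : (Fin n → ℕ) → ℝ) : Prop :=
  (∀ s, 0 ≤ μ s) ∧ (∀ s, s ∉ prodBox z → μ s = 0) ∧ ∑ s ∈ prodBox z, μ s = 1

/-- The `i`-th marginal of a joint pmf. -/
def jointMarginal {n : ℕ} (z : Fin n → ℕ) (μ : (Fin n → ℕ) → ℝ) (i : Fin n) (t : ℕ) : ℝ :=
  ∑ s ∈ (prodBox z).filter fun s => s i = t, μ s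

/-- Joint CDF of a joint pmf. -/
def jointCDF {n : ℕ} (μ : (Fin n → ℕ) → ℝ) (s : Fin n → ℕ) : ℝ :=
  ∑ t ∈ Fintype.piFinset fun i => Finset.Icc 1 (s i), μ t

/-- A (candidate) model: assigns to each `z` and tuple of marginals a joint pmf. -/
abbrev Model (n : ℕ) := (z : Fin n → ℕ) → (Fin n → ℕ → ℝ) → (Fin n → ℕ) → ℝ

/-- `f` is a model: it returns a joint pmf whose marginals are the inputs. -/
def IsModel {n : ℕ} (f : Model n) : Prop :=
  ∀ z p, (∀ i, IsPMF (z i) (p i)) →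
    IsJointPMF z (f z p) ∧ ∀ i t, jointMarginal z (f z p) i t = p i t

/-- Invariant Aggregation: merging adjacent bins `j, j+1` of marginal `i`
does not affect the joint distribution over unaffected values. -/
def SatisfiesIA {n : ℕ} (f : Model n) : Prop :=
  ∀ z p, (∀ i, IsPMF (z i) (p i)) → ∀ i : Fin n, ∀ j ∈ Finset.Icc 1 (z i - 1),
    ∀ s ∈ prodBox (Function.update z i (z i - 1)),
      f (Function.update z i (z i - 1)) (Function.update p i (collapsePM j (p i))) s =
        (if s i ≤ j then f z p s else 0) +
          (if j ≤ s i then f z p (Function.update s i (s i + 1)) else 0)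

/-- A copula measure: a probability measure on `[0,1]^ι` with standard uniform marginals. -/
def IsCopulaMeasure {ι : Type*} [Fintype ι] (μ : Measure (ι → ℝ)) : Prop :=
  IsProbabilityMeasure μ ∧ ∀ i : ι, μ.map (fun t => t i) = unif01

/-- `C` is a copula: the CDF of a probability measure with uniform marginals. -/
def IsCopula {ι : Type*} [Fintype ι] (C : (ι → ℝ) → ℝ) : Prop :=
  ∃ μ : Measure (ι → ℝ), IsCopulaMeasure μ ∧
    ∀ x : ι → ℝ, (∀ i, x i ∈ Set.Icc (0 : ℝ) 1) →
      (μ {t | ∀ i, t i ≤ x i}).toReal = C x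

/-- `f` is a copula model with copula `C`: `F_{f(p)}(s) = C(F_{p₁}(s₁),…,F_{pₙ}(sₙ))`. -/
def IsCopulaModelWith {n : ℕ} (f : Model n) (C : (Fin n → ℝ) → ℝ) : Prop :=
  IsCopula C ∧ ∀ z p, (∀ i, IsPMF (z i) (p i)) → ∀ s ∈ prodBox z,
    jointCDF (f z p) s = C fun i => pmfCDF (p i) (s i)

/-- The binary distribution `b_t` on `{1,2}` with `b_t(1) = t`, `b_t(2) = 1 - t`. -/
def binPMF (t : ℝ) : ℕ → ℝ := fun s => if s = 1 then t else if s = 2 then 1 - t else 0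

/-- `σ` is a permutation of `{1,…,w}` (fixing everything else). -/
def PermOn (w : ℕ) (σ : Equiv.Perm ℕ) : Prop := ∀ t ∉ Finset.Icc 1 w, σ t = t

/-- `M`-neutrality for `M = {i : (i : ℕ) < m}`: relabelling the bins of a marginal in `M`
just relabels the joint distribution accordingly. -/
def MNeutral {n : ℕ} (f : Model n) (m : ℕ) : Prop :=
  ∀ z p, (∀ i, IsPMF (z i) (p i)) → ∀ i : Fin n, (i : ℕ) < m →
    ∀ σ : Equiv.Perm ℕ, PermOn (z i) σ → ∀ s ∈ prodBox z,
      f z (Function.update p i fun t => p i (σ t)) s =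
        f z p (Function.update s i (σ (s i)))

/-- A coupling of two pmfs `q₁` on `[w₁]`, `q₂` on `[w₂]`. -/
def IsCoupling (w₁ w₂ : ℕ) (q₁ q₂ : ℕ → ℝ) (μ : ℕ × ℕ → ℝ) : Prop :=
  (∀ a, 0 ≤ μ a) ∧ (∀ a, a ∉ (Finset.Icc 1 w₁) ×ˢ (Finset.Icc 1 w₂) → μ a = 0) ∧
    (∀ s, ∑ t ∈ Finset.Icc 1 w₂, μ (s, t) = q₁ s) ∧
    (∀ t, ∑ s ∈ Finset.Icc 1 w₁, μ (s, t) = q₂ t)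

/-- Diagonal mass of a coupling. -/
def diagMass (w₁ w₂ : ℕ) (μ : ℕ × ℕ → ℝ) : ℝ :=
  ∑ s ∈ Finset.Icc 1 (min w₁ w₂), μ (s, s)

/-- A maximal coupling: a coupling maximizing the diagonal mass. -/
def IsMaxCoupling (w₁ w₂ : ℕ) (q₁ q₂ : ℕ → ℝ) (μ : ℕ × ℕ → ℝ) : Prop :=
  IsCoupling w₁ w₂ q₁ q₂ μ ∧
    ∀ ν, IsCoupling w₁ w₂ q₁ q₂ ν → diagMass w₁ w₂ ν ≤ diagMass w₁ w₂ μ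

/-- the function `C(x) = F_{f(b_x)}(1,…,1)` induced by an IA model is
coordinatewise nondecreasing on `[0,1]ⁿ`. -/

lemma binPMF_isPMF {t : ℝ} (h0 : 0 ≤ t) (h1 : t ≤ 1) : IsPMF 2 (binPMF t) := by
  refine ⟨fun s => ?_, fun s hs => ?_, ?_⟩
  · unfold binPMF; split_ifs <;> linarith
  · simp only [Finset.mem_Icc, not_and, not_le] at hs
    unfold binPMF
    rcases s with _ | _ | _ | s <;> simp_all
  · show ∑ s ∈ Finset.Icc 1 2, binPMF t s = 1
    rw [show Finset.Icc 1 2 = {1, 2} by decide]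
    simp [binPMF]

/-- Three-point pmf on `{1,2,3}` with masses `a, c - a, 1 - c`. -/
def triPMF (a c : ℝ) : ℕ → ℝ :=
  fun s => if s = 1 then a else if s = 2 then c - a else if s = 3 then 1 - c else 0

lemma triPMF_isPMF {a c : ℝ} (h0 : 0 ≤ a) (h1 : a ≤ c) (h2 : c ≤ 1) : IsPMF 3 (triPMF a c) := by
  refine ⟨fun s => ?_, fun s hs => ?_, ?_⟩
  · unfold triPMF; split_ifs <;> linarith
  · simp only [Finset.mem_Icc, not_and, not_le] at hs
    unfold triPMF
    rcases s with _ | _ | _ | _ | s <;> simp_all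
  · show ∑ s ∈ Finset.Icc 1 3, triPMF a c s = 1
    rw [show Finset.Icc 1 3 = {1, 2, 3} by decide]
    norm_num [triPMF]

lemma collapse2 (a c : ℝ) : collapsePM 2 (triPMF a c) = binPMF a := by
  funext t
  unfold collapsePM triPMF binPMF
  rcases t with _ | _ | _ | t
  · norm_num
  · norm_num
  · norm_num
  · have h1 : ¬ (t + 3 ≤ 2) := by omega
    have h2 : (2 : ℕ) ≤ t + 3 := by omega
    simp [h1, h2]

lemma collapse1 (a c : ℝ) : collapsePM 1 (triPMF a c) = binPMF c := by
  funext t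
  unfold collapsePM triPMF binPMF
  rcases t with _ | _ | _ | t
  · norm_num
  · norm_num
  · norm_num
  · have h1 : ¬ (t + 3 ≤ 1) := by omega
    have h2 : (1 : ℕ) ≤ t + 3 := by omega
    simp [h1, h2]

lemma IA_step (n : ℕ) (f : Model n) (hf : IsModel f) (hIA : SatisfiesIA f)
    (x : Fin n → ℝ) (hx : ∀ j, x j ∈ Set.Icc (0:ℝ) 1) (i : Fin n) (c : ℝ)
    (hc1 : x i ≤ c) (hc2 : c ≤ 1) :
    f (fun _ => 2) (fun j => binPMF (x j)) (fun _ => 1) ≤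
      f (fun _ => 2) (fun j => binPMF (Function.update x i c j)) (fun _ => 1) := by
  set z : Fin n → ℕ := Function.update (fun _ => 2) i 3 with hzdef
  set p : Fin n → ℕ → ℝ := Function.update (fun j => binPMF (x j)) i (triPMF (x i) c)
    with hpdef
  have hzi : z i = 3 := by rw [hzdef]; simp
  have hpi : p i = triPMF (x i) c := by rw [hpdef]; simp
  have hpm : ∀ j, IsPMF (z j) (p j) := by
    intro j
    by_cases h : j = i
    · subst h
      rw [hzi, hpi]
      exact triPMF_isPMF (hx j).1 hc1 hc2
    · rw [hzdef, hpdef, Function.update_of_ne h, Function.update_of_ne h]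
      exact binPMF_isPMF (hx j).1 (hx j).2
  have hzup : Function.update z i (z i - 1) = fun _ => 2 := by
    funext j
    by_cases h : j = i
    · subst h; simp [hzi]
    · rw [Function.update_of_ne h, hzdef, Function.update_of_ne h]
  have hbox : (fun _ : Fin n => 1) ∈ prodBox (Function.update z i (z i - 1)) := by
    rw [hzup]
    simp [prodBox, Fintype.mem_piFinset]
  have hup2 : Function.update p i (collapsePM 2 (p i)) = fun j => binPMF (x j) := by
    rw [hpi, collapse2, hpdef, Function.update_idem, Function.update_eq_self]
  have hup1 : Function.update p i (collapsePM 1 (p i)) =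
      fun j => binPMF (Function.update x i c j) := by
    rw [hpi, collapse1, hpdef, Function.update_idem]
    funext j
    by_cases h : j = i
    · subst h; simp
    · rw [Function.update_of_ne h, Function.update_of_ne h]
  have hj2 : (2 : ℕ) ∈ Finset.Icc 1 (z i - 1) := by rw [hzi]; decide
  have hj1 : (1 : ℕ) ∈ Finset.Icc 1 (z i - 1) := by rw [hzi]; decide
  have h2 := hIA z p hpm i 2 hj2 _ hbox
  have h1 := hIA z p hpm i 1 hj1 _ hbox
  rw [hzup, hup2] at h2
  rw [hzup, hup1] at h1
  norm_num at h1 h2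
  rw [h1, h2]
  have hnn := (hf z p hpm).1.1 (Function.update (fun _ => 1) i (1 + 1))
  linarith

theorem IA_copula_monotone (n : ℕ) (f : Model n) (hf : IsModel f) (hIA : SatisfiesIA f)
    (x y : Fin n → ℝ) (hx : ∀ i, x i ∈ Set.Icc (0 : ℝ) 1)
    (hy : ∀ i, y i ∈ Set.Icc (0 : ℝ) 1) (hxy : ∀ i, x i ≤ y i) :
    f (fun _ => 2) (fun i => binPMF (x i)) (fun _ => 1) ≤
      f (fun _ => 2) (fun i => binPMF (y i)) (fun _ => 1) := by
  have key : ∀ S : Finset (Fin n),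
      f (fun _ => 2) (fun i => binPMF (x i)) (fun _ => 1) ≤
        f (fun _ => 2) (fun i => binPMF (if i ∈ S then y i else x i)) (fun _ => 1) := by
    intro S
    induction S using Finset.induction_on with
    | empty => simp
    | @insert a S ha ih =>
        refine ih.trans ?_
        have hxv : ∀ j, (if j ∈ S then y j else x j) ∈ Set.Icc (0:ℝ) 1 := by
          intro j; by_cases h : j ∈ S <;> simp [h, hx j, hy j]
        have ha2 : (if a ∈ S then y a else x a) ≤ y a := by
          simp [ha]; exact hxy a
        have hstep := IA_step n f hf hIA (fun j => if j ∈ S then y j else x j) hxv a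
          (y a) ha2 (hy a).2
        have heq : (fun j => binPMF (if j ∈ insert a S then y j else x j)) =
            fun j => binPMF (Function.update (fun j => if j ∈ S then y j else x j) a (y a) j) := by
          funext j
          by_cases h : j = a
          · subst h; simp [ha]
          · rw [Function.update_of_ne h]
            by_cases hS : j ∈ S <;> simp [h, hS]
        rw [heq]
        exact hstep
  have := key Finset.univ
  simpa using this
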